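/- Let G be an n-vertex bipartite graph, k a positive integer, S* a fixed vertex cover of G, H the perturbation of G with respect to S*, and μ = 2nk + 2n − 1. Then: (i) for all vertex covers S and T of G of size at most k, S and T belong to the same connected component of R_k(G) if and only if f(S) and f(T) belong to the same connected component of R_μ(H); (ii) for all vertex covers Ŝ and T̂ of H of size at most μ, Ŝ and T̂ belong to the same connected component of R_μ(H) if and only if f⁻¹(Ŝ) and f⁻¹(T̂) belong to the same connected component of R_k(G). -/

import Mathlib

/-- A set of vertices is a vertex cover of `G` if it contains at least one
endpoint of every edge. -/
def IsVC {α : Type*} (G : SimpleGraph α) (S : Finset α) : Prop :=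
  ∀ ⦃u v : α⦄, G.Adj u v → u ∈ S ∨ v ∈ S

/-- Vertex type of the perturbation `H` of an `n`-vertex graph `G` with respect
to `S*`: each vertex `v ∈ S*` gets `2n` twin copies and each `v ∉ S*` gets
`2n + 1` twin copies. -/
abbrev PV (V : Type) [DecidableEq V] (n : ℕ) (Sstar : Finset V) : Type :=
  {p : V × Fin (2 * n + 1) // p.1 ∈ Sstar → (p.2 : ℕ) < 2 * n}

/-- The perturbation `H` of `G` with respect to `S*`: a copy of `u` and a copy
of `v` are adjacent iff `uv` is an edge of `G` (in particular copies of the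
same vertex are non-adjacent). -/
def perturb {V : Type} [DecidableEq V] (G : SimpleGraph V) (n : ℕ) (Sstar : Finset V) :
    SimpleGraph (PV V n Sstar) where
  Adj p q := G.Adj p.1.1 q.1.1
  symm := ⟨fun _ _ h => G.symm.symm _ _ h⟩
  loopless := ⟨fun _ h => G.loopless.irrefl _ h⟩

/-- `f(v)`: the set of copies of `v` in the perturbation. -/
def fcopy {V : Type} [DecidableEq V] [Fintype V] (n : ℕ) (Sstar : Finset V) (v : V) :
    Finset (PV V n Sstar) :=
  Finset.univ.filter (fun p => p.1.1 = v)

/-- `f(X) = ⋃_{v ∈ X} f(v)`. -/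
def fset {V : Type} [DecidableEq V] [Fintype V] (n : ℕ) (Sstar : Finset V) (X : Finset V) :
    Finset (PV V n Sstar) :=
  Finset.univ.filter (fun p => p.1.1 ∈ X)

/-- `f⁻¹(X̂) = {v : f(v) ⊆ X̂}`. -/
def finv {V : Type} [DecidableEq V] [Fintype V] (n : ℕ) (Sstar : Finset V)
    (Xh : Finset (PV V n Sstar)) : Finset V :=
  Finset.univ.filter (fun v => fcopy n Sstar v ⊆ Xh)

/-- A reconfiguration sequence in `R_k(G)` from `S` to `T`. -/
def ReconfSeq {α : Type*} [DecidableEq α] (G : SimpleGraph α) (k : ℕ) (S T : Finset α)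
    (t : ℕ) (Q : ℕ → Finset α) : Prop :=
  Q 0 = S ∧ Q t = T ∧ (∀ i ≤ t, IsVC G (Q i) ∧ (Q i).card ≤ k) ∧
    ∀ i < t, (symmDiff (Q i) (Q (i + 1))).card = 1

/-- `S` and `T` lie in the same connected component of `R_k(G)`. -/
def SameComp {α : Type*} [DecidableEq α] (G : SimpleGraph α) (k : ℕ) (S T : Finset α) : Prop :=
  ∃ t Q, ReconfSeq G k S T t Q

/-- `distR G k S T` : the length of a shortest reconfiguration sequence from
`S` to `T` in `R_k(G)` (`⊤` if none exists). -/
noncomputable def distR {α : Type*} [DecidableEq α] (G : SimpleGraph α) (k : ℕ)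
    (S T : Finset α) : ℕ∞ :=
  sInf {m : ℕ∞ | ∃ t : ℕ, (t : ℕ∞) = m ∧ ∃ Q : ℕ → Finset α, ReconfSeq G k S T t Q}

set_option linter.unusedSectionVars false

namespace Stmt8Aux

section Generic

variable {α : Type*} [DecidableEq α] {G : SimpleGraph α} {k : ℕ} {S T U A B : Finset α}

lemma isVC_mono (h : IsVC G A) (hAB : A ⊆ B) : IsVC G B :=
  fun _ _ huv => (h huv).imp (fun h => hAB h) (fun h => hAB h)

lemma sameComp_refl (h : IsVC G S) (hc : S.card ≤ k) : SameComp G k S S :=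
  ⟨0, fun _ => S, rfl, rfl, fun _ _ => ⟨h, hc⟩, fun i hi => absurd hi (Nat.not_lt_zero i)⟩

lemma sameComp_symm (h : SameComp G k S T) : SameComp G k T S := by
  obtain ⟨t, Q, h0, ht, hvc, hstep⟩ := h
  refine ⟨t, fun i => Q (t - i), by simpa, by simpa, fun i hi => hvc _ (by omega), fun i hi => ?_⟩
  simp only []
  rw [show t - i = (t - (i+1)) + 1 from by omega, symmDiff_comm]
  exact hstep _ (by omega)

lemma sameComp_trans (h1 : SameComp G k S T) (h2 : SameComp G k T U) : SameComp G k S U := by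
  obtain ⟨t1, Q1, h10, h1t, h1vc, h1step⟩ := h1
  obtain ⟨t2, Q2, h20, h2t, h2vc, h2step⟩ := h2
  have hag : Q1 t1 = Q2 0 := h1t.trans h20.symm
  refine ⟨t1 + t2, fun i => if i ≤ t1 then Q1 i else Q2 (i - t1), by simp [h10], ?_, ?_, ?_⟩
  · by_cases h : t1 + t2 ≤ t1
    · have : t2 = 0 := by omega
      simp only [if_pos h]
      rw [show t1 + t2 = t1 from by omega, hag, ← this, h2t]
    · simp only [if_neg h]
      rw [show t1 + t2 - t1 = t2 from by omega, h2t]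
  · intro i hi
    by_cases h : i ≤ t1
    · simpa [h] using h1vc i h
    · simpa [h] using h2vc (i - t1) (by omega)
  · intro i hi
    by_cases h : i + 1 ≤ t1
    · simp only [if_pos h, if_pos (by omega : i ≤ t1)]
      exact h1step i (by omega)
    · by_cases h' : i ≤ t1
      · have hit : i = t1 := by omega
        simp only [if_pos h', if_neg h]
        subst hit
        rw [hag, show i + 1 - i = 0 + 1 from by omega]
        exact h2step 0 (by omega)
      · simp only [if_neg h, if_neg h']
        rw [show i + 1 - t1 = (i - t1) + 1 from by omega]
        exact h2step (i - t1) (by omega)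

lemma sameComp_step (hS : IsVC G S) (hT : IsVC G T) (hSc : S.card ≤ k) (hTc : T.card ≤ k)
    (hd : (symmDiff S T).card = 1) : SameComp G k S T := by
  refine ⟨1, fun i => if i = 0 then S else T, by simp, by simp, ?_, ?_⟩
  · intro i hi
    interval_cases i <;> simp [hS, hT, hSc, hTc]
  · intro i hi
    interval_cases i
    simpa using hd

lemma symmDiff_card_one (h : (symmDiff S T).card = 1) :
    (∃ v, v ∉ S ∧ T = insert v S) ∨ (∃ v, v ∉ T ∧ S = insert v T) := by
  obtain ⟨v, hv⟩ := Finset.card_eq_one.mp h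
  have hmem : ∀ u, u ∈ symmDiff S T ↔ u = v := by simp [hv]
  have hv1 := (hmem v).mpr rfl
  rw [Finset.mem_symmDiff] at hv1
  by_cases hvS : v ∈ S
  · right
    refine ⟨v, by tauto, ?_⟩
    ext u
    by_cases hu : u = v
    · subst hu; simp [hvS]
    · have := hmem u
      rw [Finset.mem_symmDiff] at this
      simp only [Finset.mem_insert, hu, false_or]
      tauto
  · left
    refine ⟨v, hvS, ?_⟩
    ext u
    by_cases hu : u = v
    · subst hu; simp; tauto
    · have := hmem u
      rw [Finset.mem_symmDiff] at this
      simp only [Finset.mem_insert, hu, false_or]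
      tauto

lemma sameComp_of_subset (hA : IsVC G A) (hAB : A ⊆ B) (hB : B.card ≤ k) :
    SameComp G k A B := by
  generalize hc : (B \ A).card = c
  induction c generalizing B with
  | zero =>
    have : B = A := Finset.Subset.antisymm (fun x hx => by
      by_contra hxA
      have : x ∈ B \ A := Finset.mem_sdiff.mpr ⟨hx, hxA⟩
      simp [Finset.card_eq_zero.mp hc] at this) hAB
    subst this
    exact sameComp_refl hA hB
  | succ c ih =>
    have hne : (B \ A).Nonempty := by
      rw [← Finset.card_pos, hc]; omega
    obtain ⟨x, hx⟩ := hne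
    rw [Finset.mem_sdiff] at hx
    have hAB' : A ⊆ B.erase x := fun y hy =>
      Finset.mem_erase.mpr ⟨fun h => hx.2 (h ▸ hy), hAB hy⟩
    have hcard' : (B.erase x \ A).card = c := by
      have : B.erase x \ A = (B \ A).erase x := by
        ext y; simp [Finset.mem_erase, Finset.mem_sdiff]; tauto
      rw [this, Finset.card_erase_of_mem (Finset.mem_sdiff.mpr hx), hc]
      omega
    have h1 := ih hAB' (le_trans (Finset.card_le_card (Finset.erase_subset x B)) hB) hcard'
    refine sameComp_trans h1 (sameComp_step (isVC_mono hA hAB') (isVC_mono hA hAB)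
      (le_trans (Finset.card_le_card (Finset.erase_subset x B)) hB) hB ?_)
    have : symmDiff (B.erase x) B = {x} := by
      ext y
      rw [Finset.mem_symmDiff]
      simp only [Finset.mem_erase, Finset.mem_singleton]
      constructor
      · rintro (⟨⟨hne, hyB⟩, hnB⟩ | ⟨hyB, hy⟩)
        · exact absurd hyB hnB
        · by_contra hne; exact hy ⟨hne, hyB⟩
      · rintro rfl
        right; exact ⟨hx.1, fun h => h.1 rfl⟩
    rw [this, Finset.card_singleton]

end Generic

section Perturb

variable {V : Type} [Fintype V] [DecidableEq V] {G : SimpleGraph V} {n : ℕ} {Sstar : Finset V}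
  {k : ℕ}

lemma mem_fcopy {v : V} {p : PV V n Sstar} : p ∈ fcopy n Sstar v ↔ p.1.1 = v := by
  simp [fcopy]

lemma mem_fset {X : Finset V} {p : PV V n Sstar} : p ∈ fset n Sstar X ↔ p.1.1 ∈ X := by
  simp [fset]

lemma mem_finv {Xh : Finset (PV V n Sstar)} {v : V} :
    v ∈ finv n Sstar Xh ↔ fcopy n Sstar v ⊆ Xh := by
  simp [finv]

lemma fcopy_card_le (v : V) : (fcopy n Sstar v).card ≤ 2 * n + 1 := by
  have h := Finset.card_le_card_of_injOn (f := fun p : PV V n Sstar => p.1.2)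
    (s := fcopy n Sstar v) (t := (Finset.univ : Finset (Fin (2 * n + 1))))
    (fun p _ => Finset.mem_univ _) ?_
  · simpa using h
  · intro p hp q hq hpq
    rw [Finset.mem_coe, mem_fcopy] at hp hq
    exact Subtype.ext (Prod.ext (hp.trans hq.symm) hpq)

lemma fcopy_card_ge (v : V) : 2 * n ≤ (fcopy n Sstar v).card := by
  have h := Finset.card_le_card_of_injOn
    (f := fun j : Fin (2 * n) => (⟨(v, ⟨j.1, by omega⟩), fun _ => j.2⟩ : PV V n Sstar))
    (s := (Finset.univ : Finset (Fin (2 * n)))) (t := fcopy n Sstar v)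
    (fun j _ => mem_fcopy.mpr rfl) ?_
  · simpa using h
  · intro j _ j' _ h
    have : j.1 = j'.1 := congrArg (fun p : PV V n Sstar => (p.1.2 : ℕ)) h
    exact Fin.ext this

lemma fset_eq_biUnion (X : Finset V) :
    fset n Sstar X = X.biUnion (fcopy n Sstar) := by
  ext p
  simp only [mem_fset, Finset.mem_biUnion, mem_fcopy]
  constructor
  · exact fun h => ⟨p.1.1, h, rfl⟩
  · rintro ⟨v, hv, rfl⟩; exact hv

lemma fcopy_disjoint {v w : V} (h : v ≠ w) :
    Disjoint (fcopy n Sstar v) (fcopy n Sstar w) := by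
  rw [Finset.disjoint_left]
  intro p hp hq
  rw [mem_fcopy] at hp hq
  exact h (hp ▸ hq ▸ rfl)

lemma fset_card (X : Finset V) :
    (fset n Sstar X).card = ∑ v ∈ X, (fcopy n Sstar v).card := by
  rw [fset_eq_biUnion]
  exact Finset.card_biUnion (fun x _ y _ hxy => fcopy_disjoint hxy)

lemma fset_card_le (X : Finset V) : (fset n Sstar X).card ≤ (2 * n + 1) * X.card := by
  rw [fset_card, mul_comm]
  exact le_trans (Finset.sum_le_card_nsmul X _ (2 * n + 1) (fun v _ => fcopy_card_le v)) (by simp)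

lemma fset_card_ge (X : Finset V) : 2 * n * X.card ≤ (fset n Sstar X).card := by
  rw [fset_card, mul_comm]
  exact le_trans (by simp) (Finset.card_nsmul_le_sum X _ (2 * n) (fun v _ => fcopy_card_ge v))

lemma fset_mono {X Y : Finset V} (h : X ⊆ Y) : fset n Sstar X ⊆ fset n Sstar Y :=
  fun p hp => mem_fset.mpr (h (mem_fset.mp hp))

lemma fset_finv_subset (Xh : Finset (PV V n Sstar)) : fset n Sstar (finv n Sstar Xh) ⊆ Xh := by
  intro p hp
  exact (mem_finv.mp (mem_fset.mp hp)) (mem_fcopy.mpr rfl)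

lemma finv_fset (hn : 1 ≤ n) (X : Finset V) : finv n Sstar (fset n Sstar X) = X := by
  ext v
  rw [mem_finv]
  constructor
  · intro h
    have hp : (⟨(v, ⟨0, by omega⟩), fun _ => by simpa using by omega⟩ : PV V n Sstar) ∈
        fcopy n Sstar v := mem_fcopy.mpr rfl
    exact mem_fset.mp (h hp)
  · intro hv q hq
    exact mem_fset.mpr ((mem_fcopy.mp hq) ▸ hv)

lemma perturb_adj {p q : PV V n Sstar} :
    (perturb G n Sstar).Adj p q ↔ G.Adj p.1.1 q.1.1 := Iff.rfl

lemma isVC_fset {X : Finset V} (h : IsVC G X) : IsVC (perturb G n Sstar) (fset n Sstar X) := by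
  intro p q hpq
  exact (h (perturb_adj.mp hpq)).imp (fun h => mem_fset.mpr h) (fun h => mem_fset.mpr h)

lemma isVC_finv {Xh : Finset (PV V n Sstar)} (h : IsVC (perturb G n Sstar) Xh) :
    IsVC G (finv n Sstar Xh) := by
  intro u v huv
  by_contra hcon
  push_neg at hcon
  obtain ⟨hu, hv⟩ := hcon
  rw [mem_finv] at hu hv
  obtain ⟨p, hp, hpX⟩ := Finset.not_subset.mp hu
  obtain ⟨q, hq, hqX⟩ := Finset.not_subset.mp hv
  rw [mem_fcopy] at hp hq
  have : (perturb G n Sstar).Adj p q := by rw [perturb_adj, hp, hq]; exact huv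
  rcases h this with h' | h' <;> [exact hpX h'; exact hqX h']

/-- size bound for `f(X)` when `|X| ≤ k`, `|X| ≤ n`, `n ≥ 1`. -/
lemma fset_card_le_mu (hcard : Fintype.card V = n) (hn : 1 ≤ n) {X : Finset V}
    (hX : X.card ≤ k) : (fset n Sstar X).card ≤ 2 * n * k + 2 * n - 1 := by
  have h1 : (fset n Sstar X).card ≤ (2 * n + 1) * X.card := fset_card_le X
  have h2 : X.card ≤ n := by
    rw [← hcard, ← Finset.card_univ]
    exact Finset.card_le_univ X
  have h3 : 2 * n * X.card ≤ 2 * n * k := Nat.mul_le_mul_left _ hX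
  have h4 : (2 * n + 1) * X.card = 2 * n * X.card + X.card := by ring
  have h5 : 2 * n * X.card + X.card ≤ 2 * n * k + n := by omega
  omega

lemma finv_card_le (hn : 1 ≤ n) {Xh : Finset (PV V n Sstar)}
    (hc : Xh.card ≤ 2 * n * k + 2 * n - 1) : (finv n Sstar Xh).card ≤ k := by
  have h1 : 2 * n * (finv n Sstar Xh).card ≤ Xh.card :=
    le_trans (fset_card_ge _) (Finset.card_le_card (fset_finv_subset _))
  by_contra hcon
  push_neg at hcon
  have h2 : 2 * n * (k + 1) ≤ 2 * n * (finv n Sstar Xh).card := Nat.mul_le_mul_left _ hcon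
  have h3 : 2 * n * (k + 1) = 2 * n * k + 2 * n := by ring
  omega

/-- one lifted step -/
lemma lift_step (hcard : Fintype.card V = n) (hn : 1 ≤ n) {S T : Finset V}
    (hS : IsVC G S) (hT : IsVC G T) (hSc : S.card ≤ k) (hTc : T.card ≤ k)
    (hd : (symmDiff S T).card = 1) :
    SameComp (perturb G n Sstar) (2 * n * k + 2 * n - 1) (fset n Sstar S) (fset n Sstar T) := by
  rcases symmDiff_card_one hd with ⟨v, hv, hT'⟩ | ⟨v, hv, hS'⟩
  · exact sameComp_of_subset (isVC_fset hS) (fset_mono (hT' ▸ Finset.subset_insert v S))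
      (fset_card_le_mu hcard hn hTc)
  · exact sameComp_symm (sameComp_of_subset (isVC_fset hT)
      (fset_mono (hS' ▸ Finset.subset_insert v T)) (fset_card_le_mu hcard hn hSc))

lemma lift (hcard : Fintype.card V = n) (hn : 1 ≤ n) :
    ∀ (t : ℕ) (Q : ℕ → Finset V) (S T : Finset V), ReconfSeq G k S T t Q →
      SameComp (perturb G n Sstar) (2 * n * k + 2 * n - 1) (fset n Sstar S) (fset n Sstar T) := by
  intro t
  induction t with
  | zero =>
    rintro Q S T ⟨h0, ht, hvc, -⟩
    have hQ0 := hvc 0 le_rfl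
    rw [h0] at hQ0
    rw [← h0.symm.trans ht]
    exact sameComp_refl (isVC_fset hQ0.1) (fset_card_le_mu hcard hn hQ0.2)
  | succ t ih =>
    rintro Q S T ⟨h0, ht, hvc, hstep⟩
    have h1 := ih Q S (Q t) ⟨h0, rfl, fun i hi => hvc i (by omega), fun i hi => hstep i (by omega)⟩
    have h2 : SameComp (perturb G n Sstar) (2 * n * k + 2 * n - 1)
        (fset n Sstar (Q t)) (fset n Sstar T) := by
      rw [← ht]
      exact lift_step hcard hn (hvc t (by omega)).1 (hvc (t+1) le_rfl).1
        (hvc t (by omega)).2 (hvc (t+1) le_rfl).2 (hstep t (by omega))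
    exact sameComp_trans h1 h2

lemma proj_step {Xh Yh : Finset (PV V n Sstar)} (h1 : (symmDiff Xh Yh).card = 1) :
    (symmDiff (finv n Sstar Xh) (finv n Sstar Yh)).card ≤ 1 := by
  obtain ⟨p, hp⟩ := Finset.card_eq_one.mp h1
  have hsub : symmDiff (finv n Sstar Xh) (finv n Sstar Yh) ⊆ {p.1.1} := by
    intro v hv
    rw [Finset.mem_singleton]
    by_contra hne
    have key : ∀ q ∈ fcopy n Sstar v, (q ∈ Xh ↔ q ∈ Yh) := by
      intro q hq
      have hqp : q ≠ p := fun h => hne ((mem_fcopy.mp hq) ▸ h ▸ rfl)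
      have : q ∉ symmDiff Xh Yh := by rw [hp, Finset.mem_singleton]; exact hqp
      rw [Finset.mem_symmDiff] at this
      tauto
    have hiff : (fcopy n Sstar v ⊆ Xh) ↔ (fcopy n Sstar v ⊆ Yh) := by
      constructor <;> intro h q hq
      · exact (key q hq).mp (h hq)
      · exact (key q hq).mpr (h hq)
    rw [Finset.mem_symmDiff, mem_finv, mem_finv] at hv
    tauto
  exact le_trans (Finset.card_le_card hsub) (by simp)

lemma proj (hn : 1 ≤ n) :
    ∀ (t : ℕ) (Q : ℕ → Finset (PV V n Sstar)) (Sh Th : Finset (PV V n Sstar)),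
      ReconfSeq (perturb G n Sstar) (2 * n * k + 2 * n - 1) Sh Th t Q →
      SameComp G k (finv n Sstar Sh) (finv n Sstar Th) := by
  intro t
  induction t with
  | zero =>
    rintro Q Sh Th ⟨h0, ht, hvc, -⟩
    have hQ0 := hvc 0 le_rfl
    rw [h0] at hQ0
    rw [← h0.symm.trans ht]
    exact sameComp_refl (isVC_finv hQ0.1) (finv_card_le hn hQ0.2)
  | succ t ih =>
    rintro Q Sh Th ⟨h0, ht, hvc, hstep⟩
    have h1 := ih Q Sh (Q t) ⟨h0, rfl, fun i hi => hvc i (by omega), fun i hi => hstep i (by omega)⟩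
    have h2 : SameComp G k (finv n Sstar (Q t)) (finv n Sstar Th) := by
      rw [← ht]
      have hd := proj_step (n := n) (Sstar := Sstar) (hstep t (by omega))
      interval_cases hdd : (symmDiff (finv n Sstar (Q t)) (finv n Sstar (Q (t+1)))).card
      · have : finv n Sstar (Q t) = finv n Sstar (Q (t+1)) := by
          have := Finset.card_eq_zero.mp hdd
          rwa [← Finset.bot_eq_empty, symmDiff_eq_bot] at this
        rw [this]
        exact sameComp_refl (isVC_finv (hvc (t+1) le_rfl).1) (finv_card_le hn (hvc (t+1) le_rfl).2)
      · exact sameComp_step (isVC_finv (hvc t (by omega)).1) (isVC_finv (hvc (t+1) le_rfl).1)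
          (finv_card_le hn (hvc t (by omega)).2) (finv_card_le hn (hvc (t+1) le_rfl).2) hdd
    exact sameComp_trans h1 h2

end Perturb

end Stmt8Aux

open Stmt8Aux

/-- With `H` the perturbation of the `n`-vertex bipartite
graph `G` w.r.t. a vertex cover `S*`, and `μ = 2nk + 2n − 1`:
(i) vertex covers `S`, `T` of `G` of size at most `k` lie in the same connected
component of `R_k(G)` iff `f(S)` and `f(T)` lie in the same connected component
of `R_μ(H)`; (ii) vertex covers `Ŝ`, `T̂` of `H` of size at most `μ` lie in the
same connected component of `R_μ(H)` iff `f⁻¹(Ŝ)` and `f⁻¹(T̂)` lie in the same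
connected component of `R_k(G)`. -/
theorem stmt8 {V : Type} [Fintype V] [DecidableEq V] (G : SimpleGraph V)
    (hbip : G.Colorable 2) (n : ℕ) (hn : Fintype.card V = n)
    (Sstar : Finset V) (hSstar : IsVC G Sstar) (k : ℕ) (hk : 0 < k) :
    (∀ S T : Finset V, IsVC G S → IsVC G T → S.card ≤ k → T.card ≤ k →
      (SameComp G k S T ↔
        SameComp (perturb G n Sstar) (2 * n * k + 2 * n - 1)
          (fset n Sstar S) (fset n Sstar T))) ∧
    (∀ Sh Th : Finset (PV V n Sstar),
      IsVC (perturb G n Sstar) Sh → IsVC (perturb G n Sstar) Th →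
      Sh.card ≤ 2 * n * k + 2 * n - 1 → Th.card ≤ 2 * n * k + 2 * n - 1 →
      (SameComp (perturb G n Sstar) (2 * n * k + 2 * n - 1) Sh Th ↔
        SameComp G k (finv n Sstar Sh) (finv n Sstar Th))) := by
  rcases Nat.eq_zero_or_pos n with hn0 | hn1
  · -- degenerate case: `V` is empty
    subst hn0
    haveI hV : IsEmpty V := Fintype.card_eq_zero_iff.mp hn
    haveI hPV : IsEmpty (PV V 0 Sstar) := ⟨fun p => IsEmpty.false p.1.1⟩
    have trivG : ∀ S T : Finset V, SameComp G k S T := by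
      intro S T
      have hS : S = ∅ := Finset.eq_empty_of_isEmpty S
      have hT : T = ∅ := Finset.eq_empty_of_isEmpty T
      rw [hS, hT]
      exact sameComp_refl (fun u _ _ => (IsEmpty.false u).elim) (by simp)
    have trivH : ∀ Sh Th : Finset (PV V 0 Sstar),
        SameComp (perturb G 0 Sstar) (2 * 0 * k + 2 * 0 - 1) Sh Th := by
      intro Sh Th
      have hS : Sh = ∅ := Finset.eq_empty_of_isEmpty Sh
      have hT : Th = ∅ := Finset.eq_empty_of_isEmpty Th
      rw [hS, hT]
      exact sameComp_refl (fun u _ _ => (IsEmpty.false u).elim) (by simp)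
    exact ⟨fun S T _ _ _ _ => iff_of_true (trivG S T) (trivH _ _),
      fun Sh Th _ _ _ _ => iff_of_true (trivH Sh Th) (trivG _ _)⟩
  · have part2 : ∀ Sh Th : Finset (PV V n Sstar),
        IsVC (perturb G n Sstar) Sh → IsVC (perturb G n Sstar) Th →
        Sh.card ≤ 2 * n * k + 2 * n - 1 → Th.card ≤ 2 * n * k + 2 * n - 1 →
        (SameComp (perturb G n Sstar) (2 * n * k + 2 * n - 1) Sh Th ↔
          SameComp G k (finv n Sstar Sh) (finv n Sstar Th)) := by
      intro Sh Th hSh hTh hShc hThc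
      constructor
      · rintro ⟨t, Q, hQ⟩
        exact proj hn1 t Q Sh Th hQ
      · rintro ⟨t, Q, hQ⟩
        have a1 : SameComp (perturb G n Sstar) (2 * n * k + 2 * n - 1)
            Sh (fset n Sstar (finv n Sstar Sh)) :=
          sameComp_symm (sameComp_of_subset (isVC_fset (isVC_finv hSh))
            (fset_finv_subset Sh) hShc)
        have a2 : SameComp (perturb G n Sstar) (2 * n * k + 2 * n - 1)
            (fset n Sstar (finv n Sstar Sh)) (fset n Sstar (finv n Sstar Th)) :=
          lift hn hn1 t Q _ _ hQ
        have a3 : SameComp (perturb G n Sstar) (2 * n * k + 2 * n - 1)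
            (fset n Sstar (finv n Sstar Th)) Th :=
          sameComp_of_subset (isVC_fset (isVC_finv hTh)) (fset_finv_subset Th) hThc
        exact sameComp_trans (sameComp_trans a1 a2) a3
    refine ⟨?_, part2⟩
    intro S T hS hT hSc hTc
    constructor
    · rintro ⟨t, Q, hQ⟩
      exact lift hn hn1 t Q S T hQ
    · intro h
      have h2 := (part2 (fset n Sstar S) (fset n Sstar T) (isVC_fset hS) (isVC_fset hT)
        (fset_card_le_mu hn hn1 hSc) (fset_card_le_mu hn hn1 hTc)).mp h
      rwa [finv_fset hn1, finv_fset hn1] at h2
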